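/- Fix α₁ ≥ α₂ ≥ 0 and h ∈ ℝ. Define g : ℝ → ℝ by g(x) = η_soft(x; α₁) if |x| > α₁ + h, g(x) = sign(x)·max(h,0) if α₂ + h < |x| ≤ α₁ + h, and g(x) = η_soft(x; α₂) if |x| ≤ α₂ + h, where η_soft(x;α) = sign(x)max(|x|-α,0). If h ≥ 0, then g is odd, nondecreasing, and 1-Lipschitz. -/
import Mathlib

set_option maxHeartbeats 1000000

/-- The soft-thresholding function `η(v; α) = sign(v) · max(|v| - α, 0)`. -/
noncomputable def etaSoft (v α : ℝ) : ℝ := Real.sign v * max (|v| - α) 0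

/-- The 2-level SLOPE limiting scalar function with penalty levels `α₁ ≥ α₂ ≥ 0`
and shared magnitude `h`. -/
noncomputable def twoLevelEta (α₁ α₂ h x : ℝ) : ℝ :=
  if α₁ + h < |x| then etaSoft x α₁
  else if α₂ + h < |x| then Real.sign x * max h 0
  else etaSoft x α₂

lemma twoLevelEta_odd (α₁ α₂ h x : ℝ) :
    twoLevelEta α₁ α₂ h (-x) = -twoLevelEta α₁ α₂ h x := by
  simp only [twoLevelEta, etaSoft, abs_neg, Real.sign_neg]
  split_ifs <;> ring

/-- closed form for `x ≥ 0` -/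
lemma twoLevelEta_pos (α₁ α₂ h : ℝ) (h12 : α₂ ≤ α₁) (h2 : 0 ≤ α₂) (hh : 0 ≤ h)
    (x : ℝ) (hx : 0 ≤ x) :
    twoLevelEta α₁ α₂ h x = min (max (x - α₂) 0) h + max (x - (α₁ + h)) 0 := by
  unfold twoLevelEta etaSoft
  rcases eq_or_lt_of_le hx with hx0 | hx0
  · rw [← hx0]
    simp only [abs_zero, Real.sign_zero, zero_mul]
    rw [if_neg (by linarith), if_neg (by linarith)]
    simp only [min_def, max_def]
    split_ifs <;> linarith
  · rw [abs_of_pos hx0, Real.sign_of_pos hx0]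
    simp only [min_def, max_def]
    split_ifs <;> linarith

section P
variable (α₁ α₂ h : ℝ)

noncomputable def Pfun (x : ℝ) : ℝ := min (max (x - α₂) 0) h + max (x - (α₁ + h)) 0

lemma Pfun_nonneg (hh : 0 ≤ h) (x : ℝ) : 0 ≤ Pfun α₁ α₂ h x := by
  unfold Pfun
  have : (0:ℝ) ≤ min (max (x - α₂) 0) h := le_min (le_max_right _ _) hh
  have : (0:ℝ) ≤ max (x - (α₁ + h)) 0 := le_max_right _ _
  linarith

lemma Pfun_mono (x y : ℝ) (hxy : x ≤ y) : Pfun α₁ α₂ h x ≤ Pfun α₁ α₂ h y := by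
  unfold Pfun; gcongr <;> linarith

lemma Pfun_le_self (h12 : α₂ ≤ α₁) (h2 : 0 ≤ α₂) (hh : 0 ≤ h) (x : ℝ) (hx : 0 ≤ x) :
    Pfun α₁ α₂ h x ≤ x := by
  unfold Pfun
  simp only [min_def, max_def]
  split_ifs <;> linarith

lemma Pfun_lip (h12 : α₂ ≤ α₁) (h2 : 0 ≤ α₂) (hh : 0 ≤ h) (x y : ℝ)
    (hx : 0 ≤ x) (hxy : x ≤ y) :
    Pfun α₁ α₂ h y - Pfun α₁ α₂ h x ≤ y - x := by
  unfold Pfun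
  simp only [min_def, max_def]
  split_ifs <;> linarith

end P

/-- for `α₁ ≥ α₂ ≥ 0` and `h ≥ 0`, the 2-level SLOPE limiting scalar
function is odd, nondecreasing, and 1-Lipschitz. -/
theorem stmt_14 (α₁ α₂ h : ℝ) (h12 : α₂ ≤ α₁) (h2 : 0 ≤ α₂) (hh : 0 ≤ h) :
    (∀ x : ℝ, twoLevelEta α₁ α₂ h (-x) = -twoLevelEta α₁ α₂ h x) ∧
    Monotone (twoLevelEta α₁ α₂ h) ∧
    LipschitzWith 1 (twoLevelEta α₁ α₂ h) := by
  have hposP : ∀ x : ℝ, 0 ≤ x → twoLevelEta α₁ α₂ h x = Pfun α₁ α₂ h x :=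
    fun x hx => twoLevelEta_pos α₁ α₂ h h12 h2 hh x hx
  have hnegP : ∀ x : ℝ, x ≤ 0 → twoLevelEta α₁ α₂ h x = -Pfun α₁ α₂ h (-x) := by
    intro x hx
    have := twoLevelEta_odd α₁ α₂ h (-x)
    rw [neg_neg] at this
    rw [this, hposP (-x) (by linarith)]
  -- key two-sided bounds
  have key : ∀ x y : ℝ, x ≤ y →
      0 ≤ twoLevelEta α₁ α₂ h y - twoLevelEta α₁ α₂ h x ∧
      twoLevelEta α₁ α₂ h y - twoLevelEta α₁ α₂ h x ≤ y - x := by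
    intro x y hxy
    rcases le_total 0 x with hx | hx
    · rw [hposP x hx, hposP y (le_trans hx hxy)]
      exact ⟨by linarith [Pfun_mono α₁ α₂ h x y hxy],
        Pfun_lip α₁ α₂ h h12 h2 hh x y hx hxy⟩
    · rcases le_total y 0 with hy | hy
      · rw [hnegP x hx, hnegP y hy]
        refine ⟨by linarith [Pfun_mono α₁ α₂ h (-y) (-x) (by linarith)], ?_⟩
        have := Pfun_lip α₁ α₂ h h12 h2 hh (-y) (-x) (by linarith) (by linarith)
        linarith
      · rw [hnegP x hx, hposP y hy]
        refine ⟨by linarith [Pfun_nonneg α₁ α₂ h hh y, Pfun_nonneg α₁ α₂ h hh (-x)], ?_⟩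
        have := Pfun_le_self α₁ α₂ h h12 h2 hh y hy
        have := Pfun_le_self α₁ α₂ h h12 h2 hh (-x) (by linarith)
        linarith
  refine ⟨twoLevelEta_odd α₁ α₂ h, ?_, ?_⟩
  · intro x y hxy
    have := (key x y hxy).1
    linarith
  · apply LipschitzWith.of_dist_le_mul
    intro x y
    rw [Real.dist_eq, Real.dist_eq, NNReal.coe_one, one_mul]
    rcases le_total x y with hxy | hxy
    · obtain ⟨h1, h2'⟩ := key x y hxy
      rw [abs_of_nonpos (by linarith), abs_of_nonpos (by linarith)]
      linarith
    · obtain ⟨h1, h2'⟩ := key y x hxy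
      rw [abs_of_nonneg (by linarith), abs_of_nonneg (by linarith)]
      linarith
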